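/- Assume there exists j ∈ N₀ with r^j ∉ recc(S_k^C) (i.e., N₀ ⊄ J). If M' = ∅, then cl(conv(P^B ∖ S_k^C)) = P^B. -/

import Mathlib

open Set Pointwise

noncomputable section

variable {n : ℕ} {ι : Type*} [Fintype ι]

/-- Recession cone of a set `A`. -/
def recc (A : Set (Fin n → ℝ)) : Set (Fin n → ℝ) :=
  {d | ∀ a ∈ A, ∀ t : ℝ, 0 ≤ t → a + t • d ∈ A}

/-- The translated simplicial cone `P^B = {x̄ + Σ_j x_j r^j : x_j ≥ 0}`. -/
def PBset (xb : Fin n → ℝ) (r : ι → Fin n → ℝ) : Set (Fin n → ℝ) :=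
  {x | ∃ c : ι → ℝ, (∀ j, 0 ≤ c j) ∧ x = xb + ∑ j, c j • r j}

/-- The recession cone of `P^B`, i.e. `{Σ_j t_j r^j : t_j ≥ 0}`. -/
def reccPBset (r : ι → Fin n → ℝ) : Set (Fin n → ℝ) :=
  {x | ∃ t : ι → ℝ, (∀ j, 0 ≤ t j) ∧ x = ∑ j, t j • r j}

/-- `λ⁻ = inf {λ ≥ 0 : x̄ + λ d ∈ C}` (`+∞` if the halfline misses `C`). -/
noncomputable def lamM (xb d : Fin n → ℝ) (C : Set (Fin n → ℝ)) : EReal :=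
  sInf ((fun l : ℝ => (l : EReal)) '' {l : ℝ | 0 ≤ l ∧ xb + l • d ∈ C})

/-- `λ⁺ = sup {λ ≥ 0 : x̄ + λ d ∈ C}` (`−∞` if the halfline misses `C`). -/
noncomputable def lamP (xb d : Fin n → ℝ) (C : Set (Fin n → ℝ)) : EReal :=
  sSup ((fun l : ℝ => (l : EReal)) '' {l : ℝ | 0 ≤ l ∧ xb + l • d ∈ C})

/-- `N₀`: indices whose halfline misses `C`. -/
def N0set (xb : Fin n → ℝ) (r : ι → Fin n → ℝ) (C : Set (Fin n → ℝ)) : Set ι :=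
  {j | ∀ l : ℝ, 0 ≤ l → xb + l • r j ∉ C}

/-- `N₁`: indices with `0 < λ⁻ < +∞` and `λ⁺ = +∞`. -/
def N1set (xb : Fin n → ℝ) (r : ι → Fin n → ℝ) (C : Set (Fin n → ℝ)) : Set ι :=
  {j | 0 < lamM xb (r j) C ∧ lamM xb (r j) C < ⊤ ∧ lamP xb (r j) C = ⊤}

/-- `N₂`: indices with `0 < λ⁻ < +∞` and `λ⁻ < λ⁺ < +∞`. -/
def N2set (xb : Fin n → ℝ) (r : ι → Fin n → ℝ) (C : Set (Fin n → ℝ)) : Set ι :=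
  {j | 0 < lamM xb (r j) C ∧ lamM xb (r j) C < ⊤ ∧
    lamM xb (r j) C < lamP xb (r j) C ∧ lamP xb (r j) C < ⊤}

/-- `S_k^C = {x̄} + conv(⋃_{j∈N₂} {λ r^j : 0 ≤ λ < λ⁺_j}) + {λ r^k : λ ≤ 0} + recc(C)`. -/
def SkCset (xb : Fin n → ℝ) (r : ι → Fin n → ℝ) (C : Set (Fin n → ℝ)) (k : ι) :
    Set (Fin n → ℝ) :=
  {xb} + convexHull ℝ (⋃ j ∈ N2set xb r C,
      {y : Fin n → ℝ | ∃ l : ℝ, 0 ≤ l ∧ (l : EReal) < lamP xb (r j) C ∧ y = l • r j})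
    + {y : Fin n → ℝ | ∃ l : ℝ, l ≤ 0 ∧ y = l • r k}
    + recc C

/-- `J = {i ∈ N : r^i ∈ recc(S_k^C)}`. -/
def Jset (xb : Fin n → ℝ) (r : ι → Fin n → ℝ) (C : Set (Fin n → ℝ)) (k : ι) : Set ι :=
  {i | r i ∈ recc (SkCset xb r C k)}

/-- `γ'_{ij} = sup {γ ≥ 0 : r^i + γ r^j ∈ recc(S_k^C)}` (`+∞` if unbounded). -/
noncomputable def gam' (xb : Fin n → ℝ) (r : ι → Fin n → ℝ) (C : Set (Fin n → ℝ))
    (k i j : ι) : EReal :=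
  sSup ((fun g : ℝ => (g : EReal)) ''
    {g : ℝ | 0 ≤ g ∧ r i + g • r j ∈ recc (SkCset xb r C k)})

/-- `M' = {i ∈ J : γ'_{ij} > 0 for all j ∈ N∖J}`. -/
def M'set (xb : Fin n → ℝ) (r : ι → Fin n → ℝ) (C : Set (Fin n → ℝ)) (k : ι) : Set ι :=
  {i | i ∈ Jset xb r C k ∧ ∀ j, j ∉ Jset xb r C k → 0 < gam' xb r C k i j}

/-- `ε'_j(S) = min_{i∈S} γ'_{ij}` for `S ≠ ∅`, and `+∞` for `S = ∅` (via `sInf ∅ = ⊤`). -/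
noncomputable def eps' (xb : Fin n → ℝ) (r : ι → Fin n → ℝ) (C : Set (Fin n → ℝ))
    (k : ι) (S : Finset ι) (j : ι) : EReal :=
  sInf ((fun i => gam' xb r C k i j) '' (S : Set ι))

set_option linter.unusedSectionVars false

/-! ### Auxiliary machinery -/

section Aux

variable (xb : Fin n → ℝ) (r : ι → Fin n → ℝ) (C : Set (Fin n → ℝ)) (k : ι)

/-- The union of half-open segments generating the hull part of `S_k^C`. -/
def USet : Set (Fin n → ℝ) :=
  ⋃ j ∈ N2set xb r C,
      {y : Fin n → ℝ | ∃ l : ℝ, 0 ≤ l ∧ (l : EReal) < lamP xb (r j) C ∧ y = l • r j}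

/-- Real value of `λ⁺_j`. -/
noncomputable def lamPR (j : ι) : ℝ := (lamP xb (r j) C).toReal

/-- Coordinate description of the hull part. -/
def TS : Set (Fin n → ℝ) :=
  {y | ∃ a : ι → ℝ, (∀ m, 0 ≤ a m) ∧ (∀ m, m ∉ N2set xb r C → a m = 0) ∧
    (∑ m, a m / lamPR xb r C m) < 1 ∧ y = ∑ m, a m • r m}

variable {xb r C k}

theorem recc_add' {A : Set (Fin n → ℝ)} {d e : Fin n → ℝ}
    (hd : d ∈ recc A) (he : e ∈ recc A) : d + e ∈ recc A := by
  intro a ha t ht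
  have h1 := he (a + t • d) (hd a ha t ht) t ht
  rwa [smul_add, ← add_assoc]

theorem recc_smul' {A : Set (Fin n → ℝ)} {d : Fin n → ℝ}
    (hd : d ∈ recc A) {s : ℝ} (hs : 0 ≤ s) : s • d ∈ recc A := by
  intro a ha t ht
  have h1 := hd a ha (t * s) (mul_nonneg ht hs)
  rwa [← smul_smul] at h1

theorem lamP_eq_coe {j : ι} (hj : j ∈ N2set xb r C) :
    lamP xb (r j) C = ((lamPR xb r C j : ℝ) : EReal) := by
  refine (EReal.coe_toReal hj.2.2.2.ne ?_).symm
  intro hbot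
  have h0 : (0 : EReal) < lamP xb (r j) C := lt_trans hj.1 hj.2.2.1
  rw [hbot] at h0
  exact absurd h0 (by simp)

theorem lamPR_pos {j : ι} (hj : j ∈ N2set xb r C) : 0 < lamPR xb r C j := by
  have h0 : (0 : EReal) < lamP xb (r j) C := lt_trans hj.1 hj.2.2.1
  rw [lamP_eq_coe hj] at h0
  exact_mod_cast h0

theorem hull_subset_T : convexHull ℝ (USet xb r C) ⊆ TS xb r C := by
  classical
  apply convexHull_min
  · rintro y hy
    simp only [USet, Set.mem_iUnion] at hy
    obtain ⟨j, hj, l, hl0, hllt, rfl⟩ := hy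
    have hlR : l < lamPR xb r C j := by
      rw [lamP_eq_coe hj] at hllt; exact_mod_cast hllt
    refine ⟨fun m => if m = j then l else 0, ?_, ?_, ?_, ?_⟩
    · intro m; dsimp only; split <;> simp [hl0]
    · intro m hm
      by_cases h : m = j
      · exact absurd (h ▸ hj) hm
      · simp [h]
    · have : (∑ m, (if m = j then l else 0) / lamPR xb r C m)
          = l / lamPR xb r C j := by
        rw [Finset.sum_eq_single j]
        · simp
        · intro b _ hb; simp [hb]
        · intro h; exact absurd (Finset.mem_univ j) h
      rw [this]
      exact (div_lt_one (lamPR_pos hj)).mpr hlR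
    · simp [ite_smul]
  · rintro y ⟨a, ha0, hsup, hf, rfl⟩ z ⟨b, hb0, hbsup, hbf, rfl⟩ p q hp hq hpq
    refine ⟨fun m => p * a m + q * b m, ?_, ?_, ?_, ?_⟩
    · intro m
      exact add_nonneg (mul_nonneg hp (ha0 m)) (mul_nonneg hq (hb0 m))
    · intro m hm; simp [hsup m hm, hbsup m hm]
    · have hsplit : (∑ m, (p * a m + q * b m) / lamPR xb r C m)
          = p * (∑ m, a m / lamPR xb r C m) + q * (∑ m, b m / lamPR xb r C m) := by
        rw [Finset.mul_sum, Finset.mul_sum, ← Finset.sum_add_distrib]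
        exact Finset.sum_congr rfl fun m _ => by rw [add_div, mul_div_assoc, mul_div_assoc]
      rw [hsplit]
      rcases eq_or_lt_of_le hp with hp0 | hppos
      · have hq1 : q = 1 := by linarith
        rw [← hp0, hq1]; simpa using hbf
      · have h1 : p * (∑ m, a m / lamPR xb r C m) < p * 1 :=
          mul_lt_mul_of_pos_left hf hppos
        have h2 : q * (∑ m, b m / lamPR xb r C m) ≤ q * 1 :=
          mul_le_mul_of_nonneg_left hbf.le hq
        nlinarith
    · rw [Finset.smul_sum, Finset.smul_sum, ← Finset.sum_add_distrib]
      exact Finset.sum_congr rfl fun m _ => by rw [add_smul, smul_smul, smul_smul]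

theorem T_subset_hull (hk : k ∈ N2set xb r C) :
    TS xb r C ⊆ convexHull ℝ (USet xb r C) := by
  classical
  rintro y ⟨a, ha0, hsup, hf, rfl⟩
  set lR := lamPR xb r C with hlR
  have hterm0 : ∀ m, m ∉ N2set xb r C → a m / lR m = 0 := fun m hm => by
    rw [hsup m hm, zero_div]
  have htermnn : ∀ m, 0 ≤ a m / lR m := by
    intro m
    by_cases hm : m ∈ N2set xb r C
    · exact div_nonneg (ha0 m) (lamPR_pos hm).le
    · rw [hterm0 m hm]
  set σ := ∑ m, a m / lR m with hσdef
  have hσ0 : 0 ≤ σ := Finset.sum_nonneg fun m _ => htermnn m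
  rcases eq_or_lt_of_le hσ0 with hσz | hσpos
  · -- all coefficients vanish, y = 0
    have hz : ∀ m ∈ Finset.univ, a m / lR m = 0 :=
      (Finset.sum_eq_zero_iff_of_nonneg (fun m _ => htermnn m)).mp hσz.symm
    have haz : ∀ m, a m = 0 := by
      intro m
      by_cases hm : m ∈ N2set xb r C
      · have := hz m (Finset.mem_univ m)
        rcases div_eq_zero_iff.mp this with h | h
        · exact h
        · exact absurd h (lamPR_pos hm).ne'
      · exact hsup m hm
    have : (∑ m, a m • r m) = 0 := Finset.sum_eq_zero fun m _ => by rw [haz m, zero_smul]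
    rw [this]
    apply subset_convexHull
    simp only [USet, Set.mem_iUnion]
    exact ⟨k, hk, 0, le_refl 0, by
      simpa using lt_trans hk.1 hk.2.2.1, (zero_smul ℝ _).symm⟩
  · set F := Finset.univ.filter (· ∈ N2set xb r C) with hF
    have hsumF : (∑ m ∈ F, a m / lR m) = σ := by
      rw [hσdef, ← Finset.sum_filter_add_sum_filter_not Finset.univ
        (· ∈ N2set xb r C) (fun m => a m / lR m)]
      have : (∑ m ∈ Finset.univ.filter (¬ · ∈ N2set xb r C), a m / lR m) = 0 :=
        Finset.sum_eq_zero fun m hm => hterm0 m (Finset.mem_filter.mp hm).2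
      rw [this, add_zero]
    have key := Convex.sum_mem (t := F)
      (w := fun m => (a m / lR m) / σ)
      (z := fun m => (σ * lR m) • r m)
      (convex_convexHull ℝ (USet xb r C))
      (fun m _ => div_nonneg (htermnn m) hσ0)
      (by rw [← Finset.sum_div, hsumF, div_self hσpos.ne'])
      (fun m hm => by
        have hm2 : m ∈ N2set xb r C := (Finset.mem_filter.mp hm).2
        apply subset_convexHull
        simp only [USet, Set.mem_iUnion]
        refine ⟨m, hm2, σ * lR m, mul_nonneg hσpos.le (lamPR_pos hm2).le, ?_, rfl⟩
        rw [lamP_eq_coe hm2, EReal.coe_lt_coe_iff, ← hlR]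
        exact mul_lt_of_lt_one_left (lamPR_pos hm2) hf)
    have heq : (∑ m ∈ F, ((a m / lR m) / σ) • ((σ * lR m) • r m)) = ∑ m, a m • r m := by
      have hzero : ∀ m ∈ Finset.univ, m ∉ F →
          ((a m / lR m) / σ) • ((σ * lR m) • r m) = 0 := by
        intro m _ hm
        have hnm : m ∉ N2set xb r C := fun h =>
          hm (Finset.mem_filter.mpr ⟨Finset.mem_univ m, h⟩)
        rw [hsup m hnm]
        simp
      rw [Finset.sum_subset (Finset.subset_univ F) hzero]
      refine Finset.sum_congr rfl fun m _ => ?_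
      by_cases hm2 : m ∈ N2set xb r C
      · rw [smul_smul]
        congr 1
        have h1 : lR m ≠ 0 := (lamPR_pos hm2).ne'
        field_simp
      · rw [hsup m hm2]
        simp
    rwa [← heq]

theorem mem_SkC_iff {x : Fin n → ℝ} :
    x ∈ SkCset xb r C k ↔ ∃ q ∈ convexHull ℝ (USet xb r C), ∃ l : ℝ, l ≤ 0 ∧
      ∃ c ∈ recc C, x = xb + q + l • r k + c := by
  constructor
  · intro hx
    rw [SkCset, Set.mem_add] at hx
    obtain ⟨w, hw, c, hc, hwc⟩ := hx
    rw [Set.mem_add] at hw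
    obtain ⟨v, hv, y, ⟨l, hl, rfl⟩, hvy⟩ := hw
    rw [Set.mem_add] at hv
    obtain ⟨x1, hx1, q, hq, hx1q⟩ := hv
    rw [Set.mem_singleton_iff] at hx1
    subst hx1
    exact ⟨q, hq, l, hl, c, hc, by rw [← hwc, ← hvy, ← hx1q]⟩
  · rintro ⟨q, hq, l, hl, c, hc, rfl⟩
    exact Set.add_mem_add (Set.add_mem_add (Set.add_mem_add rfl hq) ⟨l, hl, rfl⟩) hc

theorem reccC_subset_reccS (c : Fin n → ℝ) (hc : c ∈ recc C) :
    c ∈ recc (SkCset xb r C k) := by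
  intro s hs t ht
  obtain ⟨q, hq, l, hl, c₀, hc₀, rfl⟩ := mem_SkC_iff.mp hs
  refine mem_SkC_iff.mpr ⟨q, hq, l, hl, c₀ + t • c, recc_add' hc₀ (recc_smul' hc ht), ?_⟩
  module

theorem negk_mem_reccS {μ : ℝ} (hμ : μ ≤ 0) : μ • r k ∈ recc (SkCset xb r C k) := by
  intro s hs t ht
  obtain ⟨q, hq, l, hl, c₀, hc₀, rfl⟩ := mem_SkC_iff.mp hs
  refine mem_SkC_iff.mpr ⟨q, hq, l + t * μ, add_nonpos hl (mul_nonpos_iff.mpr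
    (Or.inl ⟨ht, hμ⟩)), c₀, hc₀, ?_⟩
  module

/-- **Key lemma**: if `x̄ + t d ∈ S` for arbitrarily large `t`, then `d ∈ recc S`. -/
theorem mem_reccS_of_unbounded (hk : k ∈ N2set xb r C) {d : Fin n → ℝ}
    (h : ∀ T : ℝ, ∃ t, T ≤ t ∧ xb + t • d ∈ SkCset xb r C k) :
    d ∈ recc (SkCset xb r C k) := by
  intro s hs u hu
  rcases eq_or_lt_of_le hu with hu0 | hupos
  · rw [← hu0]; simpa using hs
  obtain ⟨q₀, hq₀, l₀, hl₀, c₀, hc₀, rfl⟩ := mem_SkC_iff.mp hs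
  obtain ⟨a₀, ha₀, hs₀, hf₀, hq₀eq⟩ := hull_subset_T hq₀
  set σ₀ := ∑ m, a₀ m / lamPR xb r C m with hσ₀
  set ε := 1 - σ₀ with hε
  have hεpos : 0 < ε := by rw [hε]; linarith
  obtain ⟨t, htge, hmem⟩ := h (max (u / ε) 1)
  have ht1 : (1 : ℝ) ≤ t := le_trans (le_max_right _ _) htge
  have htpos : 0 < t := lt_of_lt_of_le one_pos ht1
  have hut : u / t ≤ ε := by
    rw [div_le_iff₀ htpos]
    have h1 : u / ε ≤ t := le_trans (le_max_left _ _) htge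
    rw [div_le_iff₀ hεpos] at h1
    nlinarith
  have hutpos : 0 < u / t := div_pos hupos htpos
  obtain ⟨q, hq, l, hl, c, hc, heq⟩ := mem_SkC_iff.mp hmem
  have hd : t • d = q + l • r k + c := by
    have h2 : xb + t • d = xb + (q + l • r k + c) := by rw [heq]; module
    exact add_left_cancel h2
  obtain ⟨a, ha, hasup, haf, hqeq⟩ := hull_subset_T hq
  refine mem_SkC_iff.mpr ⟨q₀ + (u / t) • q, ?_, l₀ + (u / t) * l,
    add_nonpos hl₀ (mul_nonpos_iff.mpr (Or.inl ⟨hutpos.le, hl⟩)),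
    c₀ + (u / t) • c, recc_add' hc₀ (recc_smul' hc hutpos.le), ?_⟩
  · apply T_subset_hull hk
    refine ⟨fun m => a₀ m + (u / t) * a m, ?_, ?_, ?_, ?_⟩
    · intro m; exact add_nonneg (ha₀ m) (mul_nonneg hutpos.le (ha m))
    · intro m hm; dsimp only; rw [hs₀ m hm, hasup m hm, mul_zero, add_zero]
    · dsimp only
      have hsplit : (∑ m, (a₀ m + (u / t) * a m) / lamPR xb r C m)
          = σ₀ + (u / t) * (∑ m, a m / lamPR xb r C m) := by
        rw [hσ₀, Finset.mul_sum, ← Finset.sum_add_distrib]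
        exact Finset.sum_congr rfl fun m _ => by rw [add_div, mul_div_assoc]
      rw [hsplit]
      have h3 : (u / t) * (∑ m, a m / lamPR xb r C m) < (u / t) * 1 :=
        mul_lt_mul_of_pos_left haf hutpos
      rw [mul_one] at h3
      linarith
    · rw [hq₀eq, hqeq, Finset.smul_sum, ← Finset.sum_add_distrib]
      exact Finset.sum_congr rfl fun m _ => by rw [add_smul, smul_smul]
  · have h1 : u • d = (u / t) • (t • d) := by
      rw [smul_smul, div_mul_cancel₀ _ htpos.ne']
    rw [h1, hd]
    module

theorem coords_eq (hr : LinearIndependent ℝ r) {a b : ι → ℝ}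
    (h : (∑ m, a m • r m) = ∑ m, b m • r m) : a = b := by
  have h2 : (∑ m, (a m - b m) • r m) = 0 := by
    simp only [sub_smul, Finset.sum_sub_distrib, h, sub_self]
  funext m
  have := Fintype.linearIndependent_iff.mp hr (fun m => a m - b m) h2 m
  linarith

theorem N0_not_N2 {j : ι} (hj : j ∈ N0set xb r C) : j ∉ N2set xb r C := by
  intro hj2
  have hempty : {l : ℝ | 0 ≤ l ∧ xb + l • r j ∈ C} = ∅ := by
    ext l; simp only [Set.mem_setOf_eq, Set.mem_empty_iff_false, iff_false, not_and]
    exact fun hl => hj l hl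
  have : lamM xb (r j) C = ⊤ := by
    rw [lamM, hempty, Set.image_empty, sInf_empty]
  exact absurd (this ▸ hj2.2.1) (lt_irrefl ⊤)

/-- Along a ray from `x̄` in a direction `r j₀` with `j₀ ∉ N₂ ∪ {k}` not a recession
direction of `S`, the whole open ray avoids `S`. -/
theorem xb_ray_notin (hr : LinearIndependent ℝ r) (hrecc : recc C ⊆ reccPBset r)
    {j₀ : ι} (hj₀N2 : j₀ ∉ N2set xb r C) (hj₀k : j₀ ≠ k)
    (hj₀J : r j₀ ∉ recc (SkCset xb r C k)) {t : ℝ} (ht : 0 < t) :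
    xb + t • r j₀ ∉ SkCset xb r C k := by
  classical
  intro hmem
  obtain ⟨q, hq, l, hl, c, hc, heq⟩ := mem_SkC_iff.mp hmem
  obtain ⟨a, ha, hasup, -, hqeq⟩ := hull_subset_T hq
  obtain ⟨tc, htc, hceq⟩ := hrecc hc
  have hsum : (∑ m, (if m = j₀ then t else 0) • r m)
      = ∑ m, (a m + (if m = k then l else 0) + tc m) • r m := by
    have h1 : (∑ m, (if m = j₀ then t else 0) • r m) = t • r j₀ := by
      simp [ite_smul]
    have h2 : (∑ m, (a m + (if m = k then l else 0) + tc m) • r m)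
        = q + l • r k + c := by
      simp only [add_smul, Finset.sum_add_distrib, ite_smul, zero_smul]
      rw [← hqeq, ← hceq, Finset.sum_ite_eq']
      simp
    rw [h1, h2]
    have h3 : xb + t • r j₀ = xb + (q + l • r k + c) := by rw [heq]; module
    exact add_left_cancel h3
  have hco := coords_eq hr hsum
  have hkey : ∀ m, (if m = j₀ then t else 0) = a m + (if m = k then l else 0) + tc m :=
    fun m => congrFun hco m
  -- coordinate j₀
  have hj₀co := hkey j₀
  rw [if_pos rfl, if_neg hj₀k, hasup j₀ hj₀N2, add_zero, zero_add] at hj₀co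
  -- coordinates m ∉ {j₀, k}
  have hothers : ∀ m, m ≠ j₀ → m ≠ k → tc m = 0 := by
    intro m hm1 hm2
    have := hkey m
    rw [if_neg hm1, if_neg hm2, add_zero] at this
    have h4 := ha m
    have h5 := htc m
    linarith
  -- c = t • r j₀ + tc k • r k
  have hcrep : c = t • r j₀ + tc k • r k := by
    rw [hceq]
    rw [show (Finset.univ : Finset ι) = ({j₀, k} : Finset ι) ∪
      (Finset.univ \ {j₀, k}) from by simp [Finset.union_comm]]
    rw [Finset.sum_union (Finset.disjoint_sdiff)]
    have hz : (∑ m ∈ Finset.univ \ ({j₀, k} : Finset ι), tc m • r m) = 0 := by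
      apply Finset.sum_eq_zero
      intro m hm
      simp only [Finset.mem_sdiff, Finset.mem_insert, Finset.mem_singleton] at hm
      push_neg at hm
      rw [hothers m hm.2.1 hm.2.2, zero_smul]
    rw [hz, add_zero, Finset.sum_pair hj₀k, hj₀co]
  -- conclude r j₀ ∈ recc S
  have hd1 : (1 / t) • c ∈ recc (SkCset xb r C k) :=
    reccC_subset_reccS _ (recc_smul' hc (by positivity))
  have hd2 : (-(tc k / t)) • r k ∈ recc (SkCset xb r C k) :=
    negk_mem_reccS (neg_nonpos.mpr (div_nonneg (htc k) ht.le))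
  have hfin : (1 / t) • c + (-(tc k / t)) • r k = r j₀ := by
    rw [hcrep]
    have h6 : (1 / t) * t = 1 := by field_simp
    rw [smul_add, smul_smul, smul_smul, h6, one_smul]
    have h7 : (1 / t) * tc k = tc k / t := by ring
    rw [h7]
    module
  exact hj₀J (hfin ▸ recc_add' hd1 hd2)

theorem tail_out (hk : k ∈ N2set xb r C) {d : Fin n → ℝ}
    (hd : d ∉ recc (SkCset xb r C k)) :
    ∃ T : ℝ, ∀ t, T ≤ t → xb + t • d ∉ SkCset xb r C k := by
  by_contra hcon
  push_neg at hcon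
  exact hd (mem_reccS_of_unbounded hk fun T => by
    obtain ⟨t, ht1, ht2⟩ := hcon T
    exact ⟨t, ht1, ht2⟩)

theorem mem_PB (xb : Fin n → ℝ) {d : Fin n → ℝ} (hd : d ∈ reccPBset r) {t : ℝ}
    (ht : 0 ≤ t) : xb + t • d ∈ PBset xb r := by
  obtain ⟨tc, htc, rfl⟩ := hd
  refine ⟨fun m => t * tc m, fun m => mul_nonneg ht (htc m), ?_⟩
  rw [Finset.smul_sum]
  exact congrArg _ (Finset.sum_congr rfl fun m _ => by rw [smul_smul])

theorem PB_convex (xb : Fin n → ℝ) (r : ι → Fin n → ℝ) : Convex ℝ (PBset xb r) := by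
  rintro x ⟨cx, hcx, rfl⟩ y ⟨cy, hcy, rfl⟩ p q hp hq hpq
  refine ⟨fun m => p * cx m + q * cy m,
    fun m => add_nonneg (mul_nonneg hp (hcx m)) (mul_nonneg hq (hcy m)), ?_⟩
  have hxb : p • xb + q • xb = xb := by rw [← add_smul, hpq, one_smul]
  have hsum : (∑ m, (p * cx m + q * cy m) • r m)
      = p • (∑ m, cx m • r m) + q • (∑ m, cy m • r m) := by
    rw [Finset.smul_sum, Finset.smul_sum, ← Finset.sum_add_distrib]
    exact Finset.sum_congr rfl fun m _ => by rw [add_smul, smul_smul, smul_smul]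
  rw [hsum]
  match_scalars <;> linarith [hpq]

theorem PB_closed (xb : Fin n → ℝ) (r : ι → Fin n → ℝ) (hr : LinearIndependent ℝ r) :
    IsClosed (PBset xb r) := by
  classical
  let f : (ι → ℝ) →ₗ[ℝ] (Fin n → ℝ) :=
    { toFun := fun c => ∑ j, c j • r j
      map_add' := by
        intro a b
        simp only [Pi.add_apply, add_smul, Finset.sum_add_distrib]
      map_smul' := by
        intro s a
        simp only [Pi.smul_apply, smul_eq_mul, RingHom.id_apply, Finset.smul_sum, smul_smul] }
  have hker : LinearMap.ker f = ⊥ := by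
    rw [LinearMap.ker_eq_bot']
    intro c hc
    exact funext (Fintype.linearIndependent_iff.mp hr c hc)
  have hemb := LinearMap.isClosedEmbedding_of_injective hker
  have horth : IsClosed {c : ι → ℝ | ∀ j, 0 ≤ c j} := by
    have hset : {c : ι → ℝ | ∀ j, 0 ≤ c j} = ⋂ j, {c : ι → ℝ | 0 ≤ c j} := by
      ext c; simp
    rw [hset]
    exact isClosed_iInter fun j => isClosed_le continuous_const (continuous_apply j)
  have himg : IsClosed (f '' {c : ι → ℝ | ∀ j, 0 ≤ c j}) := hemb.isClosedMap _ horth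
  have hPB : PBset xb r = (fun y => xb + y) '' (f '' {c : ι → ℝ | ∀ j, 0 ≤ c j}) := by
    ext x
    constructor
    · rintro ⟨c, hc, rfl⟩
      exact ⟨f c, ⟨c, hc, rfl⟩, rfl⟩
    · rintro ⟨y, ⟨c, hc, rfl⟩, rfl⟩
      exact ⟨c, hc, rfl⟩
  rw [hPB]
  exact (Homeomorph.addLeft xb).isClosedMap _ himg

/-- If a tail of the ray `x̄ + t d` lies in `P ∖ S`, then `d` is a recession direction
of `cl conv (P ∖ S)`. -/
theorem ray_mem_reccD {d : Fin n → ℝ} {T : ℝ}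
    (h : ∀ t, T ≤ t → xb + t • d ∈ PBset xb r \ SkCset xb r C k) :
    d ∈ recc (closure (convexHull ℝ (PBset xb r \ SkCset xb r C k))) := by
  intro a ha u hu
  rcases eq_or_lt_of_le hu with hu0 | hupos
  · rw [← hu0]; simpa using ha
  have hconv : Convex ℝ (closure (convexHull ℝ (PBset xb r \ SkCset xb r C k))) :=
    (convex_convexHull ℝ _).closure
  set D := closure (convexHull ℝ (PBset xb r \ SkCset xb r C k)) with hD
  set g : ℕ → (Fin n → ℝ) := fun m => (a + u • d) + (((m : ℝ) + 1))⁻¹ • (xb - a)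
    with hg
  have htend : Filter.Tendsto g Filter.atTop (nhds (a + u • d)) := by
    rw [hg]
    have h1 : Filter.Tendsto (fun m : ℕ => (((m : ℝ) + 1))⁻¹ • (xb - a))
        Filter.atTop (nhds 0) := by
      simpa [one_div] using (tendsto_one_div_add_atTop_nhds_zero_nat (𝕜 := ℝ)).smul_const (xb - a)
    simpa using Filter.Tendsto.add (tendsto_const_nhds (x := a + u • d)) h1
  apply isClosed_closure.mem_of_tendsto htend
  rw [Filter.eventually_atTop]
  refine ⟨⌈T / u⌉₊, fun m hm => ?_⟩
  have hm1 : (0 : ℝ) < (m : ℝ) + 1 := by positivity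
  have hsm : T ≤ u * ((m : ℝ) + 1) := by
    have h2 : T / u ≤ (⌈T / u⌉₊ : ℝ) := Nat.le_ceil _
    have h3 : ((⌈T / u⌉₊ : ℕ) : ℝ) ≤ (m : ℝ) := by exact_mod_cast hm
    have h4 : T / u ≤ (m : ℝ) + 1 := by linarith
    rw [div_le_iff₀ hupos] at h4
    linarith [h4]
  have hmem : xb + (u * ((m : ℝ) + 1)) • d ∈ PBset xb r \ SkCset xb r C k :=
    h _ hsm
  have hgm : g m = (1 - ((m : ℝ) + 1)⁻¹) • a
      + ((m : ℝ) + 1)⁻¹ • (xb + (u * ((m : ℝ) + 1)) • d) := by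
    rw [hg]
    match_scalars
    · ring
    · field_simp
    · field_simp
  have hθ1 : (0 : ℝ) ≤ 1 - ((m : ℝ) + 1)⁻¹ := by
    have : ((m : ℝ) + 1)⁻¹ ≤ 1 := by
      rw [inv_le_one_iff₀]; right; linarith
    linarith
  rw [hgm]
  exact hconv ha (subset_closure (subset_convexHull ℝ _ hmem)) hθ1
    (by positivity) (by ring)

theorem basis_mem_reccPB (i : ι) : r i ∈ reccPBset r := by
  classical
  refine ⟨fun m => if m = i then 1 else 0, fun m => by dsimp only; split <;> norm_num, ?_⟩
  simp [ite_smul]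

theorem two_mem_reccPB (i j : ι) {γ : ℝ} (hγ : 0 ≤ γ) :
    r i + γ • r j ∈ reccPBset r := by
  classical
  refine ⟨fun m => (if m = i then 1 else 0) + (if m = j then γ else 0), ?_, ?_⟩
  · intro m
    dsimp only
    split <;> split <;> linarith
  · simp [add_smul, Finset.sum_add_distrib, ite_smul]

end Aux

/-- Proposition 11. If some `j ∈ N₀` has `r^j ∉ recc(S_k^C)` and
`M' = ∅`, then `cl conv(P^B ∖ S_k^C) = P^B`. -/
theorem stmt19 (xb : Fin n → ℝ) (r : ι → Fin n → ℝ) (hr : LinearIndependent ℝ r)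
    (C : Set (Fin n → ℝ)) (hCopen : IsOpen C) (hCconv : Convex ℝ C)
    (hxb : xb ∉ closure C) (hrecc : recc C ⊆ reccPBset r)
    (k : ι) (hk : k ∈ N2set xb r C)
    (hN0 : ∃ j ∈ N0set xb r C, r j ∉ recc (SkCset xb r C k))
    (hM : M'set xb r C k = ∅) :
    closure (convexHull ℝ (PBset xb r \ SkCset xb r C k)) = PBset xb r := by
  classical
  obtain ⟨j₀, hj₀, hj₀J⟩ := hN0
  have hj₀N2 : j₀ ∉ N2set xb r C := N0_not_N2 hj₀
  have hj₀k : j₀ ≠ k := fun h => hj₀N2 (h ▸ hk)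
  set D := closure (convexHull ℝ (PBset xb r \ SkCset xb r C k)) with hD
  -- x̄ is in the closure
  have hxbD : xb ∈ D := by
    have hseq : ∀ m : ℕ, xb + (((m : ℝ) + 1))⁻¹ • r j₀ ∈
        PBset xb r \ SkCset xb r C k := by
      intro m
      have hm1 : (0 : ℝ) < ((m : ℝ) + 1)⁻¹ := by positivity
      exact ⟨mem_PB xb (basis_mem_reccPB j₀) hm1.le,
        xb_ray_notin hr hrecc hj₀N2 hj₀k hj₀J hm1⟩
    have htend : Filter.Tendsto (fun m : ℕ => xb + (((m : ℝ) + 1))⁻¹ • r j₀)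
        Filter.atTop (nhds xb) := by
      have h1 : Filter.Tendsto (fun m : ℕ => (((m : ℝ) + 1))⁻¹ • r j₀)
          Filter.atTop (nhds 0) := by
        simpa [one_div] using (tendsto_one_div_add_atTop_nhds_zero_nat (𝕜 := ℝ)).smul_const (r j₀)
      simpa using Filter.Tendsto.add (tendsto_const_nhds (x := xb)) h1
    exact isClosed_closure.mem_of_tendsto htend (Filter.Eventually.of_forall fun m =>
      subset_closure (subset_convexHull ℝ _ (hseq m)))
  -- every r i is a recession direction of D
  have hrecD : ∀ i, r i ∈ recc D := by
    intro i
    by_cases hiJ : i ∈ Jset xb r C k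
    · -- use M' = ∅
      have hnotM : i ∉ M'set xb r C k := by rw [hM]; exact Set.notMem_empty i
      obtain ⟨j, hjJ, hγle⟩ : ∃ j, j ∉ Jset xb r C k ∧ ¬(0 < gam' xb r C k i j) := by
        by_contra hco
        push_neg at hco
        exact hnotM ⟨hiJ, hco⟩
      have hγ : gam' xb r C k i j ≤ 0 := not_lt.mp hγle
      have hdm : ∀ m : ℕ, r i + (((m : ℝ) + 1))⁻¹ • r j ∈ recc D := by
        intro m
        have hγpos : (0 : ℝ) < ((m : ℝ) + 1)⁻¹ := by positivity
        have hnot : r i + (((m : ℝ) + 1))⁻¹ • r j ∉ recc (SkCset xb r C k) := by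
          intro hmem
          have hle : ((((m : ℝ) + 1)⁻¹ : ℝ) : EReal) ≤ gam' xb r C k i j :=
            le_sSup ⟨_, ⟨hγpos.le, hmem⟩, rfl⟩
          have hle0 : ((((m : ℝ) + 1)⁻¹ : ℝ) : EReal) ≤ ((0 : ℝ) : EReal) := by
            rw [EReal.coe_zero]
            exact le_trans hle hγ
          rw [EReal.coe_le_coe_iff] at hle0
          linarith
        obtain ⟨T, hT⟩ := tail_out hk hnot
        apply ray_mem_reccD (T := max T 0)
        intro t htt
        exact ⟨mem_PB xb (two_mem_reccPB i j hγpos.le) (le_trans (le_max_right T 0) htt),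
          hT t (le_trans (le_max_left T 0) htt)⟩
      intro a ha u hu
      have hmemm : ∀ m : ℕ, (a + u • r i) + (((m : ℝ) + 1))⁻¹ • (u • r j) ∈ D := by
        intro m
        have h5 := hdm m a ha u hu
        have h6 : a + u • (r i + (((m : ℝ) + 1))⁻¹ • r j)
            = (a + u • r i) + (((m : ℝ) + 1))⁻¹ • (u • r j) := by module
        rwa [h6] at h5
      have htend : Filter.Tendsto
          (fun m : ℕ => (a + u • r i) + (((m : ℝ) + 1))⁻¹ • (u • r j))
          Filter.atTop (nhds (a + u • r i)) := by
        have h1 : Filter.Tendsto (fun m : ℕ => (((m : ℝ) + 1))⁻¹ • (u • r j))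
            Filter.atTop (nhds 0) := by
          simpa [one_div] using
            (tendsto_one_div_add_atTop_nhds_zero_nat (𝕜 := ℝ)).smul_const (u • r j)
        simpa using Filter.Tendsto.add (tendsto_const_nhds (x := a + u • r i)) h1
      exact isClosed_closure.mem_of_tendsto htend
        (Filter.Eventually.of_forall fun m => hmemm m)
    · -- direct tail ray
      have hnot : r i ∉ recc (SkCset xb r C k) := hiJ
      obtain ⟨T, hT⟩ := tail_out hk hnot
      apply ray_mem_reccD (T := max T 0)
      intro t htt
      exact ⟨mem_PB xb (basis_mem_reccPB i) (le_trans (le_max_right T 0) htt),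
        hT t (le_trans (le_max_left T 0) htt)⟩
  -- assemble
  apply subset_antisymm
  · exact closure_minimal (convexHull_min Set.diff_subset (PB_convex xb r))
      (PB_closed xb r hr)
  · rintro x ⟨cf, hcf, rfl⟩
    have claim : ∀ F : Finset ι, xb + ∑ m ∈ F, cf m • r m ∈ D := by
      intro F
      induction F using Finset.induction_on with
      | empty => simpa using hxbD
      | insert b F' hnm ih =>
        rw [Finset.sum_insert hnm]
        have h7 := hrecD b (xb + ∑ m ∈ F', cf m • r m) ih (cf b) (hcf b)
        rwa [show (xb + ∑ m ∈ F', cf m • r m) + cf b • r b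
          = xb + (cf b • r b + ∑ m ∈ F', cf m • r m) from by module] at h7
    exact claim Finset.univ
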